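/- Let I ⊆ ℝ be an open interval, b, c, f₅ : ℝ → ℝ with c(x) ≠ 0 on I, let ε ∈ {1, −1}, and suppose the function y_p(x) = −b(x)/(2c(x)) + ε·f₅(x) is differentiable on I. Define a(x) = ( b(x)² − 4c(x)²f₅(x)² )/(4c(x)) + y_p'(x). Let B be differentiable on I with B'(x) = 2ε·c(x)·f₅(x), and G differentiable on I with G'(x) = c(x)·exp(B(x)). Then y_p solves the Riccati equation on I, and for every constant C ∈ ℝ the function y(x) = y_p(x) + exp(B(x))/(C − G(x)) satisfies y'(x) = a(x) + b(x)y(x) + c(x)y(x)² at every x ∈ I with C − G(x) ≠ 0. -/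

import Mathlib

/-- Theorem 10 (Case 10): with `y_p = −b/(2c) + ε·f₅` differentiable with
derivative `d`, `a = (b² − 4c²f₅²)/(4c) + d`, `B' = 2εcf₅` and
`G' = c · exp B`, the function `y_p` solves the Riccati equation, and
`y = y_p + exp B / (C − G)` solves it wherever `C − G ≠ 0`. -/
theorem riccati_case10
    (p q : ℝ) (a b c f₅ B G d : ℝ → ℝ) (ε : ℝ) (hε : ε = 1 ∨ ε = -1)
    (hc : ∀ x ∈ Set.Ioo p q, c x ≠ 0)
    (hyp : ∀ x ∈ Set.Ioo p q,
      HasDerivAt (fun t => -b t / (2 * c t) + ε * f₅ t) (d x) x)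
    (ha : ∀ x ∈ Set.Ioo p q,
      a x = (b x ^ 2 - 4 * c x ^ 2 * f₅ x ^ 2) / (4 * c x) + d x)
    (hB : ∀ x ∈ Set.Ioo p q, HasDerivAt B (2 * ε * c x * f₅ x) x)
    (hG : ∀ x ∈ Set.Ioo p q, HasDerivAt G (c x * Real.exp (B x)) x)
    (C : ℝ) :
    (∀ x ∈ Set.Ioo p q,
      HasDerivAt (fun t => -b t / (2 * c t) + ε * f₅ t)
        (a x + b x * (-b x / (2 * c x) + ε * f₅ x)
          + c x * (-b x / (2 * c x) + ε * f₅ x) ^ 2) x) ∧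
    (∀ x ∈ Set.Ioo p q, C - G x ≠ 0 →
      HasDerivAt (fun t =>
          -b t / (2 * c t) + ε * f₅ t + Real.exp (B t) / (C - G t))
        (a x + b x * (-b x / (2 * c x) + ε * f₅ x + Real.exp (B x) / (C - G x))
          + c x * (-b x / (2 * c x) + ε * f₅ x
            + Real.exp (B x) / (C - G x)) ^ 2) x) := by
  have hε2 : ε ^ 2 = 1 := by rcases hε with h | h <;> simp [h]
  constructor
  · intro x hx
    have key : a x + b x * (-b x / (2 * c x) + ε * f₅ x)
        + c x * (-b x / (2 * c x) + ε * f₅ x) ^ 2 = d x := by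
      have hcx := hc x hx
      rw [ha x hx]
      field_simp
      ring_nf
      rw [hε2]
      ring
    rw [key]; exact hyp x hx
  · intro x hx hCG
    have hcx := hc x hx
    have hexp : HasDerivAt (fun t => Real.exp (B t))
        (Real.exp (B x) * (2 * ε * c x * f₅ x)) x := by
      simpa [mul_comm] using (hB x hx).exp
    have hden : HasDerivAt (fun t => C - G t) (-(c x * Real.exp (B x))) x :=
      (hG x hx).const_sub C
    have hdiv := hexp.div hden hCG
    have hsum := (hyp x hx).add hdiv
    refine hsum.congr_deriv (Eq.symm ?_)
    rw [ha x hx]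
    have hy : a x = (b x ^ 2 - 4 * c x ^ 2 * f₅ x ^ 2) / (4 * c x) + d x := ha x hx
    field_simp
    ring_nf
    rw [hε2]
    ring
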